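/- Let Y, A be {0,1}-valued random variables, X a random variable in a measurable space, R a version of E[Y | σ(X,A)], and ℓ : {0,1}×{0,1} → ℝ a loss function. Let C be any oblivious property, i.e., a predicate on joint distributions of triples (predictor, A, Y) of {0,1}-valued random variables. Then the infimum of E[ℓ(Ŷ, Y)] over all randomized predictors Ŷ based on (X, A) whose joint law with (A, Y) satisfies C equals the infimum of E[ℓ(Y*, Y)] over all predictors Y* derived from (R, A) whose joint law with (A, Y) satisfies C. In particular, if an optimal C-satisfying predictor exists, there is one derived from (R, A) alone. -/

import Mathlib

open MeasureTheory ProbabilityTheory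
open scoped ENNReal

section Aux

variable {Ω γ : Type*} [MeasurableSpace Ω] [MeasurableSpace γ]

lemma exists_pred_pairing (μ : Measure Ω) [IsProbabilityMeasure μ]
    (T : Ω → γ) (hT : Measurable T) (p : Ω → ℝ) (hp : Measurable p)
    (hp01 : ∀ ω, p ω ∈ Set.Icc (0:ℝ) 1) :
    ∃ g : γ → ℝ, Measurable g ∧ (∀ z, g z ∈ Set.Icc (0:ℝ) 1) ∧
      ∀ w : γ → ℝ, Measurable w → (∀ z, w z ∈ Set.Icc (0:ℝ) 1) →
        ∫ ω, g (T ω) * w (T ω) ∂μ = ∫ ω, p ω * w (T ω) ∂μ := by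
  set pE : Ω → ℝ≥0∞ := fun ω => ENNReal.ofReal (p ω) with hpEdef
  have hpEmeas : Measurable pE := hp.ennreal_ofReal
  have hpEle : ∀ ω, pE ω ≤ 1 := fun ω => ENNReal.ofReal_le_one.2 (hp01 ω).2
  have hwd_le : μ.withDensity pE ≤ μ := by
    refine Measure.le_iff.2 fun s hs => ?_
    rw [withDensity_apply _ hs]
    calc ∫⁻ ω in s, pE ω ∂μ ≤ ∫⁻ _ in s, 1 ∂μ := lintegral_mono fun ω => hpEle ω
    _ = μ s := by simp
  haveI : IsFiniteMeasure (μ.withDensity pE) := isFiniteMeasure_of_le μ hwd_le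
  set ν : Measure γ := μ.map T with hνdef
  set νp : Measure γ := (μ.withDensity pE).map T with hνpdef
  haveI : IsFiniteMeasure ν := ⟨by
    rw [hνdef, Measure.map_apply hT MeasurableSet.univ]; exact measure_lt_top μ _⟩
  haveI : IsFiniteMeasure νp := ⟨by
    rw [hνpdef, Measure.map_apply hT MeasurableSet.univ]; exact measure_lt_top _ _⟩
  have hνple : νp ≤ ν := Measure.map_mono hwd_le hT
  have hac : νp ≪ ν := Measure.absolutelyContinuous_of_le hνple
  set g₀ : γ → ℝ≥0∞ := νp.rnDeriv ν with hg₀def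
  have hg₀ : Measurable g₀ := Measure.measurable_rnDeriv _ _
  have hdens : ν.withDensity g₀ = νp := Measure.withDensity_rnDeriv_eq νp ν hac
  have hle1 : g₀ ≤ᵐ[ν] 1 := Measure.rnDeriv_le_one_of_le hνple
  refine ⟨fun z => (min (g₀ z) 1).toReal, (hg₀.min measurable_const).ennreal_toReal,
      fun z => ⟨ENNReal.toReal_nonneg, ?_⟩, fun w hw hw01 => ?_⟩
  · calc (min (g₀ z) 1).toReal ≤ (1 : ℝ≥0∞).toReal :=
        ENNReal.toReal_mono ENNReal.one_ne_top (min_le_right _ _)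
    _ = 1 := by simp
  set g : γ → ℝ := fun z => (min (g₀ z) 1).toReal with hgdef
  have hg : Measurable g := (hg₀.min measurable_const).ennreal_toReal
  have hg0 : ∀ z, 0 ≤ g z := fun z => ENNReal.toReal_nonneg
  have hwE : Measurable fun z => ENNReal.ofReal (w z) := hw.ennreal_ofReal
  have hgE : ∀ z, ENNReal.ofReal (g z) = min (g₀ z) 1 := fun z =>
    ENNReal.ofReal_toReal (ne_top_of_le_ne_top ENNReal.one_ne_top (min_le_right _ _))
  have key : ∫⁻ ω, ENNReal.ofReal (g (T ω)) * ENNReal.ofReal (w (T ω)) ∂μ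
      = ∫⁻ ω, ENNReal.ofReal (p ω) * ENNReal.ofReal (w (T ω)) ∂μ := by
    calc ∫⁻ ω, ENNReal.ofReal (g (T ω)) * ENNReal.ofReal (w (T ω)) ∂μ
        = ∫⁻ z, ENNReal.ofReal (g z) * ENNReal.ofReal (w z) ∂ν :=
          (lintegral_map (hg.ennreal_ofReal.mul hwE) hT).symm
    _ = ∫⁻ z, min (g₀ z) 1 * ENNReal.ofReal (w z) ∂ν := by simp_rw [hgE]
    _ = ∫⁻ z, g₀ z * ENNReal.ofReal (w z) ∂ν :=
          lintegral_congr_ae (hle1.mono fun z hz => by simp only [Pi.one_apply] at hz; dsimp only; rw [min_eq_left hz])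
    _ = ∫⁻ z, ENNReal.ofReal (w z) ∂νp := by
          rw [← hdens]
          simpa [Pi.mul_apply] using (lintegral_withDensity_eq_lintegral_mul ν hg₀ hwE).symm
    _ = ∫⁻ ω, ENNReal.ofReal (w (T ω)) ∂(μ.withDensity pE) := lintegral_map hwE hT
    _ = ∫⁻ ω, ENNReal.ofReal (p ω) * ENNReal.ofReal (w (T ω)) ∂μ := by
          simpa [Function.comp, Pi.mul_apply] using
            lintegral_withDensity_eq_lintegral_mul μ hpEmeas (hwE.comp hT)
  have h1 : ∫ ω, g (T ω) * w (T ω) ∂μ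
      = (∫⁻ ω, ENNReal.ofReal (g (T ω)) * ENNReal.ofReal (w (T ω)) ∂μ).toReal := by
    rw [integral_eq_lintegral_of_nonneg_ae
        (ae_of_all _ fun ω => mul_nonneg (hg0 _) (hw01 _).1)
        ((hg.comp hT).mul (hw.comp hT)).aestronglyMeasurable]
    congr 1
    exact lintegral_congr fun ω => ENNReal.ofReal_mul (hg0 _)
  have h2 : ∫ ω, p ω * w (T ω) ∂μ
      = (∫⁻ ω, ENNReal.ofReal (p ω) * ENNReal.ofReal (w (T ω)) ∂μ).toReal := by
    rw [integral_eq_lintegral_of_nonneg_ae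
        (ae_of_all _ fun ω => mul_nonneg (hp01 _).1 (hw01 _).1)
        (hp.mul (hw.comp hT)).aestronglyMeasurable]
    congr 1
    exact lintegral_congr fun ω => ENNReal.ofReal_mul (hp01 _).1
  rw [h1, h2, key]

lemma pred_pairing_ae_eq (μ : Measure Ω) [IsProbabilityMeasure μ]
    (T : Ω → γ) (hT : Measurable T) (p : Ω → ℝ) (hp : Measurable p)
    (hp01 : ∀ ω, p ω ∈ Set.Icc (0:ℝ) 1)
    (hpm : Measurable[MeasurableSpace.comap T inferInstance] p)
    (g : γ → ℝ) (hg : Measurable g) (hg01 : ∀ z, g z ∈ Set.Icc (0:ℝ) 1)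
    (hpair : ∀ w : γ → ℝ, Measurable w → (∀ z, w z ∈ Set.Icc (0:ℝ) 1) →
        ∫ ω, g (T ω) * w (T ω) ∂μ = ∫ ω, p ω * w (T ω) ∂μ) :
    (fun ω => g (T ω)) =ᵐ[μ] p := by
  have hm : MeasurableSpace.comap T inferInstance ≤ ‹MeasurableSpace Ω› := hT.comap_le
  haveI : SigmaFinite (μ.trim hm) := inferInstance
  have hint : ∀ (h : Ω → ℝ), Measurable h → (∀ ω, h ω ∈ Set.Icc (0:ℝ) 1) → Integrable h μ :=
    fun h hm' h01 => (integrable_const (1:ℝ)).mono' hm'.aestronglyMeasurable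
      (ae_of_all _ fun ω => by
        rw [Real.norm_eq_abs, abs_le]; exact ⟨by linarith [(h01 ω).1], (h01 ω).2⟩)
  have hgT : Measurable (fun ω => g (T ω)) := hg.comp hT
  have hgT01 : ∀ ω, g (T ω) ∈ Set.Icc (0:ℝ) 1 := fun ω => hg01 _
  refine ae_eq_of_forall_setIntegral_eq_of_sigmaFinite' hm
    (fun s _ _ => (hint _ hgT hgT01).integrableOn)
    (fun s _ _ => (hint _ hp hp01).integrableOn)
    (fun s hs _ => ?_)
    ((hg.comp (comap_measurable T)).stronglyMeasurable.aestronglyMeasurable)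
    (hpm.stronglyMeasurable.aestronglyMeasurable)
  obtain ⟨E, hE, rfl⟩ := MeasurableSpace.measurableSet_comap.mp hs
  set w : γ → ℝ := E.indicator (fun _ => (1:ℝ)) with hwdef
  have hw : Measurable w := measurable_const.indicator hE
  have hw01 : ∀ z, w z ∈ Set.Icc (0:ℝ) 1 := fun z => by
    by_cases h : z ∈ E <;> simp [hwdef, Set.indicator_apply, h]
  have hprod : ∀ (h : Ω → ℝ), ∫ ω, h ω * w (T ω) ∂μ = ∫ ω in T ⁻¹' E, h ω ∂μ := by
    intro h
    rw [← integral_indicator (hT hE)]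
    refine integral_congr_ae (ae_of_all _ fun ω => ?_)
    by_cases hmem : T ω ∈ E <;>
      simp [hwdef, Set.indicator_apply, hmem]
  rw [← hprod (fun ω => g (T ω)), ← hprod p, hpair w hw hw01]

end Aux

/-- The σ-algebra generated by a pair of random variables. -/
def pairSigma {Ω β γ : Type*} [MeasurableSpace β] [MeasurableSpace γ]
    (X : Ω → β) (A : Ω → γ) : MeasurableSpace Ω :=
  MeasurableSpace.comap (fun ω => (X ω, A ω)) inferInstance

/-- Let `R` be a version of `E[Y ∣ σ(X,A)]`, let `L` be a loss and `C`
any oblivious property, i.e. a predicate depending only on the joint distribution of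
(predictor, A, Y); since `μ`, `A`, `Y` are fixed, that joint distribution is encoded by
the function `J p a y = P(predictor = 1, A = a, Y = y)` where `p : Ω → [0,1]` is the
acceptance probability of the randomized predictor. Then the infimum of the expected
loss over randomized predictors `f(X,A)` whose joint law satisfies `C` equals the
infimum over predictors `g(R,A)` derived from `(R,A)` satisfying `C`; in particular, if
an optimal `C`-satisfying predictor based on `(X,A)` exists, then there is one derived
from `(R,A)` alone. -/
theorem oblivious_optimal_derived_from_bayes_regressor
    {Ω β : Type*} [MeasurableSpace Ω] [MeasurableSpace β]
    (μ : Measure Ω) [IsProbabilityMeasure μ]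
    (Y : Ω → Bool) (X : Ω → β) (A : Ω → Bool) (R : Ω → ℝ)
    (hY : Measurable Y) (hX : Measurable X) (hA : Measurable A)
    (hRmeas : Measurable[pairSigma X A] R)
    (hR : R =ᵐ[μ] μ[fun ω => if Y ω then (1:ℝ) else 0 | pairSigma X A])
    (L : Bool → Bool → ℝ)
    (C : (Bool → Bool → ℝ) → Prop) :
    let J : (Ω → ℝ) → Bool → Bool → ℝ := fun p a y =>
      ∫ ω in {ω | A ω = a ∧ Y ω = y}, p ω ∂μ
    let loss : (Ω → ℝ) → ℝ := fun p =>
      ∫ ω, (p ω * L true (Y ω) + (1 - p ω) * L false (Y ω)) ∂μ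
    (sInf {l : ℝ | ∃ f : β × Bool → ℝ, Measurable f ∧ (∀ z, f z ∈ Set.Icc (0:ℝ) 1) ∧
          C (J (fun ω => f (X ω, A ω))) ∧ l = loss (fun ω => f (X ω, A ω))} =
        sInf {l : ℝ | ∃ g : ℝ × Bool → ℝ, Measurable g ∧ (∀ z, g z ∈ Set.Icc (0:ℝ) 1) ∧
          C (J (fun ω => g (R ω, A ω))) ∧ l = loss (fun ω => g (R ω, A ω))}) ∧
      ((∃ f : β × Bool → ℝ, Measurable f ∧ (∀ z, f z ∈ Set.Icc (0:ℝ) 1) ∧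
          C (J (fun ω => f (X ω, A ω))) ∧
          ∀ f' : β × Bool → ℝ, Measurable f' → (∀ z, f' z ∈ Set.Icc (0:ℝ) 1) →
            C (J (fun ω => f' (X ω, A ω))) →
            loss (fun ω => f (X ω, A ω)) ≤ loss (fun ω => f' (X ω, A ω))) →
        ∃ g : ℝ × Bool → ℝ, Measurable g ∧ (∀ z, g z ∈ Set.Icc (0:ℝ) 1) ∧
          C (J (fun ω => g (R ω, A ω))) ∧
          ∀ f' : β × Bool → ℝ, Measurable f' → (∀ z, f' z ∈ Set.Icc (0:ℝ) 1) →
            C (J (fun ω => f' (X ω, A ω))) →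
            loss (fun ω => g (R ω, A ω)) ≤ loss (fun ω => f' (X ω, A ω))) := by
  intro J loss
  classical
  -- basic measurability facts
  have hXA : Measurable fun ω => (X ω, A ω) := hX.prodMk hA
  have hm1 : pairSigma X A ≤ ‹MeasurableSpace Ω› := hXA.comap_le
  have hAm1 : Measurable[pairSigma X A] A :=
    measurable_snd.comp (comap_measurable (fun ω => (X ω, A ω)))
  have hRa : Measurable R := hRmeas.mono hm1 le_rfl
  have hT : Measurable fun ω => (R ω, A ω) := hRa.prodMk hA
  have hTm1 : Measurable[pairSigma X A] fun ω => (R ω, A ω) := hRmeas.prodMk hAm1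
  have hm21 : pairSigma R A ≤ pairSigma X A := hTm1.comap_le
  -- the indicator of Y
  set iY : Ω → ℝ := fun ω => if Y ω then (1:ℝ) else 0 with hiYdef
  have hiY : Measurable iY :=
    Measurable.ite (hY (measurableSet_singleton true)) measurable_const measurable_const
  have hiY01 : ∀ ω, iY ω ∈ Set.Icc (0:ℝ) 1 := fun ω => by
    by_cases h : Y ω <;> simp [hiYdef, h]
  -- integrability helpers
  have int01 : ∀ {h : Ω → ℝ}, Measurable h → (∀ ω, h ω ∈ Set.Icc (0:ℝ) 1) → Integrable h μ := by
    intro h hm h01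
    refine (integrable_const (1:ℝ)).mono' hm.aestronglyMeasurable (ae_of_all _ fun ω => ?_)
    rw [Real.norm_eq_abs, abs_le]
    exact ⟨by linarith [(h01 ω).1], (h01 ω).2⟩
  have mul01 : ∀ {x y : ℝ}, x ∈ Set.Icc (0:ℝ) 1 → y ∈ Set.Icc (0:ℝ) 1 →
      x * y ∈ Set.Icc (0:ℝ) 1 := fun hx hy =>
    ⟨mul_nonneg hx.1 hy.1, mul_le_one₀ hx.2 hy.1 hy.2⟩
  have intb : ∀ {h : Ω → ℝ} (c : ℝ), AEStronglyMeasurable h μ →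
      (∀ᵐ ω ∂μ, |h ω| ≤ c) → Integrable h μ := by
    intro h c hm hb
    exact (integrable_const c).mono' hm (by simpa [Real.norm_eq_abs] using hb)
  -- R is in [0,1] a.e.
  have hR01 : ∀ᵐ ω ∂μ, R ω ∈ Set.Icc (0:ℝ) 1 := by
    have h0 : (0 : Ω → ℝ) ≤ᵐ[μ] μ[iY|pairSigma X A] :=
      condExp_nonneg (ae_of_all _ fun ω => (hiY01 ω).1)
    have h1 : μ[iY|pairSigma X A] ≤ᵐ[μ] fun _ => (1:ℝ) := by
      have hmono := condExp_mono (m := pairSigma X A) (μ := μ) (int01 hiY hiY01)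
        (integrable_const (1:ℝ)) (ae_of_all _ fun ω => (hiY01 ω).2)
      rwa [condExp_const hm1 (1:ℝ)] at hmono
    filter_upwards [hR, h0, h1] with ω he h0ω h1ω
    rw [he]; exact ⟨h0ω, h1ω⟩
  -- pull-out property: replace iY by R against σ(X,A)-measurable weights
  have repl : ∀ u : Ω → ℝ, Measurable u → Measurable[pairSigma X A] u →
      (∀ ω, u ω ∈ Set.Icc (0:ℝ) 1) →
      ∫ ω, u ω * iY ω ∂μ = ∫ ω, u ω * R ω ∂μ := by
    intro u hu hum1 hu01
    have hmul01 : ∀ ω, u ω * iY ω ∈ Set.Icc (0:ℝ) 1 := fun ω => mul01 (hu01 ω) (hiY01 ω)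
    have hintuiY : Integrable (u * iY) μ := int01 (hu.mul hiY) hmul01
    have hpull : μ[u * iY|pairSigma X A] =ᵐ[μ] u * μ[iY|pairSigma X A] :=
      condExp_mul_of_stronglyMeasurable_left hum1.stronglyMeasurable hintuiY (int01 hiY hiY01)
    calc ∫ ω, u ω * iY ω ∂μ = ∫ ω, (μ[u * iY|pairSigma X A]) ω ∂μ :=
          (integral_condExp hm1).symm
    _ = ∫ ω, (u * μ[iY|pairSigma X A]) ω ∂μ := integral_congr_ae hpull
    _ = ∫ ω, u ω * R ω ∂μ := by
          refine integral_congr_ae (hR.mono fun ω h => ?_)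
          simp only [Pi.mul_apply]; rw [h]
  -- indicators of A and Y values
  set e : Bool → Ω → ℝ := fun a ω => if A ω = a then 1 else 0 with hedef
  set χ : Bool → Ω → ℝ := fun y ω => if Y ω = y then 1 else 0 with hχdef
  have he : ∀ a, Measurable (e a) := fun a =>
    Measurable.ite (hA (measurableSet_singleton a)) measurable_const measurable_const
  have hem1 : ∀ a, Measurable[pairSigma X A] (e a) := fun a =>
    Measurable.ite (hAm1 (measurableSet_singleton a)) measurable_const measurable_const
  have hχm : ∀ y, Measurable (χ y) := fun y =>
    Measurable.ite (hY (measurableSet_singleton y)) measurable_const measurable_const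
  have he01 : ∀ a ω, e a ω ∈ Set.Icc (0:ℝ) 1 := fun a ω => by
    by_cases h : A ω = a <;> simp [hedef, h]
  have hχ01 : ∀ y ω, χ y ω ∈ Set.Icc (0:ℝ) 1 := fun y ω => by
    by_cases h : Y ω = y <;> simp [hχdef, h]
  have hS : ∀ (a y : Bool), MeasurableSet {ω | A ω = a ∧ Y ω = y} := fun a y =>
    (hA (measurableSet_singleton a)).inter (hY (measurableSet_singleton y))
  have hJprod : ∀ (p : Ω → ℝ) (a y : Bool), J p a y = ∫ ω, p ω * e a ω * χ y ω ∂μ := by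
    intro p a y
    show (∫ ω in {ω | A ω = a ∧ Y ω = y}, p ω ∂μ) = _
    rw [← integral_indicator (hS a y)]
    refine integral_congr_ae (ae_of_all _ fun ω => ?_)
    by_cases h1 : A ω = a <;> by_cases h2 : Y ω = y <;>
      simp [Set.indicator_apply, h1, h2, hedef, hχdef]
  -- replacement of χ y by R-expressions
  have intprod : ∀ {u : Ω → ℝ}, Measurable u → (∀ ω, u ω ∈ Set.Icc (0:ℝ) 1) →
      Integrable (fun ω => u ω * R ω) μ := by
    intro u hu hu01
    refine intb 1 ((hu.mul hRa).aestronglyMeasurable) (hR01.mono fun ω h => ?_)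
    rw [abs_mul]
    nlinarith [abs_nonneg (u ω), abs_nonneg (R ω), abs_le.2 ⟨by linarith [(hu01 ω).1], (hu01 ω).2⟩,
      abs_le.2 (⟨by linarith [h.1], h.2⟩ : -1 ≤ R ω ∧ R ω ≤ 1)]
  have replχ : ∀ (u : Ω → ℝ), Measurable u → Measurable[pairSigma X A] u →
      (∀ ω, u ω ∈ Set.Icc (0:ℝ) 1) → ∀ y : Bool,
      ∫ ω, u ω * χ y ω ∂μ = ∫ ω, u ω * (if y then R ω else 1 - R ω) ∂μ := by
    intro u hu hum1 hu01 y
    have hbase : ∫ ω, u ω * iY ω ∂μ = ∫ ω, u ω * R ω ∂μ := repl u hu hum1 hu01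
    have hprod01 : ∀ ω, u ω * iY ω ∈ Set.Icc (0:ℝ) 1 := fun ω => mul01 (hu01 ω) (hiY01 ω)
    cases y with
    | true =>
      have hχeq : ∀ ω, χ true ω = iY ω := fun ω => by
        by_cases h : Y ω <;> simp [hχdef, hiYdef, h]
      calc ∫ ω, u ω * χ true ω ∂μ = ∫ ω, u ω * iY ω ∂μ := rfl
      _ = ∫ ω, u ω * R ω ∂μ := hbase
      _ = ∫ ω, u ω * (if true then R ω else 1 - R ω) ∂μ := by simp
    | false =>
      have hsplit : ∀ ω, u ω * χ false ω = u ω - u ω * iY ω := fun ω => by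
        by_cases h : Y ω <;> simp [hχdef, hiYdef, h]
      calc ∫ ω, u ω * χ false ω ∂μ = ∫ ω, (u ω - u ω * iY ω) ∂μ :=
            integral_congr_ae (ae_of_all _ fun ω => hsplit ω)
      _ = (∫ ω, u ω ∂μ) - ∫ ω, u ω * iY ω ∂μ :=
            integral_sub (int01 hu hu01) (int01 (hu.mul hiY) hprod01)
      _ = (∫ ω, u ω ∂μ) - ∫ ω, u ω * R ω ∂μ := by rw [hbase]
      _ = ∫ ω, (u ω - u ω * R ω) ∂μ := (integral_sub (int01 hu hu01) (intprod hu hu01)).symm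
      _ = ∫ ω, u ω * (if false then R ω else 1 - R ω) ∂μ :=
            integral_congr_ae (ae_of_all _ fun ω => by simp; ring)
  -- the clamped weight functions on ℝ × Bool
  set cl : ℝ → ℝ := fun r => max 0 (min 1 r) with hcldef
  have hclm : Measurable cl := measurable_const.max (measurable_const.min measurable_id)
  have hcl01 : ∀ r, cl r ∈ Set.Icc (0:ℝ) 1 := fun r =>
    ⟨le_max_left _ _, max_le zero_le_one (min_le_left _ _)⟩
  have hclR : ∀ᵐ ω ∂μ, cl (R ω) = R ω := by
    refine hR01.mono fun ω h => ?_
    rw [hcldef]; dsimp only; rw [min_eq_right h.2, max_eq_right h.1]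
  set W : Bool → Bool → ℝ × Bool → ℝ := fun a y z =>
    (if z.2 = a then (1:ℝ) else 0) * (if y then cl z.1 else 1 - cl z.1) with hWdef
  have hWm : ∀ a y, Measurable (W a y) := by
    intro a y
    have h1 : Measurable fun z : ℝ × Bool => (if z.2 = a then (1:ℝ) else 0) :=
      Measurable.ite (measurable_snd (measurableSet_singleton a)) measurable_const
        measurable_const
    have h2 : Measurable fun z : ℝ × Bool => (if y then cl z.1 else 1 - cl z.1) := by
      cases y
      · simp only [Bool.false_eq_true, ↓reduceIte]
        exact measurable_const.sub (hclm.comp measurable_fst)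
      · simp only [↓reduceIte]
        exact hclm.comp measurable_fst
    exact h1.mul h2
  have hW01 : ∀ a y z, W a y z ∈ Set.Icc (0:ℝ) 1 := by
    intro a y z
    have e1 : (if z.2 = a then (1:ℝ) else 0) ∈ Set.Icc (0:ℝ) 1 := by split <;> simp
    have e2 : (if y then cl z.1 else 1 - cl z.1) ∈ Set.Icc (0:ℝ) 1 := by
      cases y
      · simp only [Bool.false_eq_true, if_false]
        exact ⟨by linarith [(hcl01 z.1).2], by linarith [(hcl01 z.1).1]⟩
      · simpa using hcl01 z.1
    exact mul01 e1 e2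
  have hWT : ∀ a y, ∀ᵐ ω ∂μ,
      W a y (R ω, A ω) = e a ω * (if y then R ω else 1 - R ω) := by
    intro a y
    refine hclR.mono fun ω h => ?_
    rw [hWdef, hedef]; dsimp only; rw [h]
  -- core: J and loss agree for paired predictors
  have hcross : ∀ (p : Ω → ℝ), Measurable p → Measurable[pairSigma X A] p →
      (∀ ω, p ω ∈ Set.Icc (0:ℝ) 1) →
      ∀ (g : ℝ × Bool → ℝ), Measurable g → (∀ z, g z ∈ Set.Icc (0:ℝ) 1) →
      (∀ w : ℝ × Bool → ℝ, Measurable w → (∀ z, w z ∈ Set.Icc (0:ℝ) 1) →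
        ∫ ω, g (R ω, A ω) * w (R ω, A ω) ∂μ = ∫ ω, p ω * w (R ω, A ω) ∂μ) →
      (∀ a y, J (fun ω => g (R ω, A ω)) a y = J p a y) ∧
        loss (fun ω => g (R ω, A ω)) = loss p := by
    intro p hp hpm1 hp01 g hg hg01 hpair
    have hq : Measurable fun ω => g (R ω, A ω) := hg.comp hT
    have hqm1 : Measurable[pairSigma X A] fun ω => g (R ω, A ω) := hg.comp hTm1
    have hq01 : ∀ ω, g (R ω, A ω) ∈ Set.Icc (0:ℝ) 1 := fun ω => hg01 _
    have chain : ∀ (u : Ω → ℝ), Measurable u → Measurable[pairSigma X A] u →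
        (∀ ω, u ω ∈ Set.Icc (0:ℝ) 1) → ∀ a y,
        J u a y = ∫ ω, u ω * W a y (R ω, A ω) ∂μ := by
      intro u hu hum1 hu01 a y
      have hue : Measurable fun ω => u ω * e a ω := hu.mul (he a)
      have huem1 : Measurable[pairSigma X A] fun ω => u ω * e a ω := hum1.mul (hem1 a)
      have hue01 : ∀ ω, u ω * e a ω ∈ Set.Icc (0:ℝ) 1 := fun ω => mul01 (hu01 ω) (he01 a ω)
      calc J u a y = ∫ ω, u ω * e a ω * χ y ω ∂μ := hJprod u a y
      _ = ∫ ω, (u ω * e a ω) * (if y then R ω else 1 - R ω) ∂μ :=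
            replχ _ hue huem1 hue01 y
      _ = ∫ ω, u ω * W a y (R ω, A ω) ∂μ := by
            refine integral_congr_ae ((hWT a y).mono fun ω h => ?_)
            dsimp only; rw [h]; ring
    have hJ : ∀ a y, J (fun ω => g (R ω, A ω)) a y = J p a y := by
      intro a y
      rw [chain _ hq hqm1 hq01 a y, chain p hp hpm1 hp01 a y]
      exact hpair (W a y) (hWm a y) (hW01 a y)
    refine ⟨hJ, ?_⟩
    -- loss is determined by J
    have hlossfor : ∀ (u : Ω → ℝ), Measurable u → (∀ ω, u ω ∈ Set.Icc (0:ℝ) 1) →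
        loss u = (L true true - L false true) * (J u true true + J u false true)
          + ((L true false - L false false) * (J u true false + J u false false)
          + ∫ ω, L false (Y ω) ∂μ) := by
      intro u hu hu01
      have hLY : Measurable fun ω => L false (Y ω) := measurable_from_top.comp hY
      have hLYint : Integrable (fun ω => L false (Y ω)) μ := by
        refine intb (max |L false true| |L false false|) hLY.aestronglyMeasurable
          (ae_of_all _ fun ω => ?_)
        cases hy : Y ω <;> simp [hy, le_max_left, le_max_right]
      have huχ01 : ∀ y ω, u ω * χ y ω ∈ Set.Icc (0:ℝ) 1 := fun y ω => mul01 (hu01 ω) (hχ01 y ω)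
      have huχint : ∀ y, Integrable (fun ω => u ω * χ y ω) μ := fun y =>
        int01 (hu.mul (hχm y)) (huχ01 y)
      have hsplitχ : ∀ y, ∫ ω, u ω * χ y ω ∂μ = J u true y + J u false y := by
        intro y
        have hpteq : ∀ ω, u ω * χ y ω
            = u ω * e true ω * χ y ω + u ω * e false ω * χ y ω := by
          intro ω; cases ha : A ω <;> simp [hedef, ha] <;> ring
        have hi1 : Integrable (fun ω => u ω * e true ω * χ y ω) μ :=
          int01 ((hu.mul (he true)).mul (hχm y))
            (fun ω => mul01 (mul01 (hu01 ω) (he01 true ω)) (hχ01 y ω))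
        have hi2 : Integrable (fun ω => u ω * e false ω * χ y ω) μ :=
          int01 ((hu.mul (he false)).mul (hχm y))
            (fun ω => mul01 (mul01 (hu01 ω) (he01 false ω)) (hχ01 y ω))
        calc ∫ ω, u ω * χ y ω ∂μ
            = ∫ ω, (u ω * e true ω * χ y ω + u ω * e false ω * χ y ω) ∂μ :=
              integral_congr_ae (ae_of_all _ hpteq)
        _ = (∫ ω, u ω * e true ω * χ y ω ∂μ) + ∫ ω, u ω * e false ω * χ y ω ∂μ :=
              integral_add hi1 hi2
        _ = J u true y + J u false y := by rw [hJprod u true y, hJprod u false y]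
      have hdecomp : ∀ ω, u ω * L true (Y ω) + (1 - u ω) * L false (Y ω)
          = (L true true - L false true) * (u ω * χ true ω)
            + ((L true false - L false false) * (u ω * χ false ω) + L false (Y ω)) := by
        intro ω; cases hy : Y ω <;> simp [hχdef, hy] <;> ring
      have hi3 : Integrable (fun ω => (L true true - L false true) * (u ω * χ true ω)) μ :=
        (huχint true).const_mul _
      have hi4 : Integrable (fun ω =>
          (L true false - L false false) * (u ω * χ false ω)) μ :=
        (huχint false).const_mul _
      calc loss u = ∫ ω, (u ω * L true (Y ω) + (1 - u ω) * L false (Y ω)) ∂μ := rfl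
      _ = ∫ ω, ((L true true - L false true) * (u ω * χ true ω)
            + ((L true false - L false false) * (u ω * χ false ω) + L false (Y ω))) ∂μ :=
            integral_congr_ae (ae_of_all _ hdecomp)
      _ = (∫ ω, (L true true - L false true) * (u ω * χ true ω) ∂μ)
            + ∫ ω, ((L true false - L false false) * (u ω * χ false ω) + L false (Y ω)) ∂μ :=
            integral_add hi3 (hi4.add hLYint)
      _ = (∫ ω, (L true true - L false true) * (u ω * χ true ω) ∂μ)
            + ((∫ ω, (L true false - L false false) * (u ω * χ false ω) ∂μ)
              + ∫ ω, L false (Y ω) ∂μ) := by rw [integral_add hi4 hLYint]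
      _ = (L true true - L false true) * (∫ ω, u ω * χ true ω ∂μ)
            + ((L true false - L false false) * (∫ ω, u ω * χ false ω ∂μ)
              + ∫ ω, L false (Y ω) ∂μ) := by rw [integral_const_mul, integral_const_mul]
      _ = _ := by rw [hsplitχ true, hsplitχ false]
    rw [hlossfor _ hq hq01, hlossfor p hp hp01, hJ true true, hJ false true,
      hJ true false, hJ false false]
  -- MAIN construction
  have MAIN : ∀ p : Ω → ℝ, Measurable p → Measurable[pairSigma X A] p →
      (∀ ω, p ω ∈ Set.Icc (0:ℝ) 1) →
      ∃ g : ℝ × Bool → ℝ, Measurable g ∧ (∀ z, g z ∈ Set.Icc (0:ℝ) 1) ∧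
        (∀ a y, J (fun ω => g (R ω, A ω)) a y = J p a y) ∧
        loss (fun ω => g (R ω, A ω)) = loss p := by
    intro p hp hpm1 hp01
    obtain ⟨g, hg, hg01, hpair⟩ := exists_pred_pairing μ (fun ω => (R ω, A ω)) hT p hp hp01
    exact ⟨g, hg, hg01, hcross p hp hpm1 hp01 g hg hg01 hpair⟩
  have REV : ∀ g : ℝ × Bool → ℝ, Measurable g → (∀ z, g z ∈ Set.Icc (0:ℝ) 1) →
      ∃ f : β × Bool → ℝ, Measurable f ∧ (∀ z, f z ∈ Set.Icc (0:ℝ) 1) ∧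
        (fun ω => f (X ω, A ω)) =ᵐ[μ] fun ω => g (R ω, A ω) := by
    intro g hg hg01
    have hq : Measurable fun ω => g (R ω, A ω) := hg.comp hT
    have hq01 : ∀ ω, g (R ω, A ω) ∈ Set.Icc (0:ℝ) 1 := fun ω => hg01 _
    have hqm2 : Measurable[pairSigma R A] fun ω => g (R ω, A ω) :=
      hg.comp (comap_measurable _)
    have hqm1 : Measurable[pairSigma X A] fun ω => g (R ω, A ω) := hqm2.mono hm21 le_rfl
    obtain ⟨f, hf, hf01, hpair⟩ :=
      exists_pred_pairing μ (fun ω => (X ω, A ω)) hXA _ hq hq01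
    exact ⟨f, hf, hf01,
      pred_pairing_ae_eq μ _ hXA _ hq hq01 hqm1 f hf hf01 hpair⟩
  have AEJL : ∀ p q : Ω → ℝ, p =ᵐ[μ] q →
      (∀ a y, J p a y = J q a y) ∧ loss p = loss q := by
    intro p q h
    constructor
    · intro a y
      exact integral_congr_ae (ae_restrict_of_ae h)
    · exact integral_congr_ae (h.mono fun ω hω => by dsimp only; rw [hω])
  constructor
  · -- equality of infima
    congr 1
    ext l
    simp only [Set.mem_setOf_eq]
    constructor
    · rintro ⟨f, hf, hf01, hC, rfl⟩
      have hp : Measurable fun ω => f (X ω, A ω) := hf.comp hXA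
      have hpm1 : Measurable[pairSigma X A] fun ω => f (X ω, A ω) :=
        hf.comp (comap_measurable _)
      obtain ⟨g, hg, hg01, hJ, hL⟩ := MAIN _ hp hpm1 (fun ω => hf01 _)
      refine ⟨g, hg, hg01, ?_, hL.symm⟩
      rw [show J (fun ω => g (R ω, A ω)) = J (fun ω => f (X ω, A ω)) from
        funext fun a => funext fun y => hJ a y]
      exact hC
    · rintro ⟨g, hg, hg01, hC, rfl⟩
      obtain ⟨f, hf, hf01, hae⟩ := REV g hg hg01
      obtain ⟨hJ, hL⟩ := AEJL _ _ hae
      refine ⟨f, hf, hf01, ?_, hL.symm⟩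
      rw [show J (fun ω => f (X ω, A ω)) = J (fun ω => g (R ω, A ω)) from
        funext fun a => funext fun y => hJ a y]
      exact hC
  · rintro ⟨f, hf, hf01, hC, hopt⟩
    have hp : Measurable fun ω => f (X ω, A ω) := hf.comp hXA
    have hpm1 : Measurable[pairSigma X A] fun ω => f (X ω, A ω) :=
      hf.comp (comap_measurable _)
    obtain ⟨g, hg, hg01, hJ, hL⟩ := MAIN _ hp hpm1 (fun ω => hf01 _)
    refine ⟨g, hg, hg01, ?_, fun f' hf' hf01' hC' => ?_⟩
    · rw [show J (fun ω => g (R ω, A ω)) = J (fun ω => f (X ω, A ω)) from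
        funext fun a => funext fun y => hJ a y]
      exact hC
    · rw [hL]; exact hopt f' hf' hf01' hC'
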